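/- arXiv:1606.09309 — 3 statements merged into one kernel-verified Lean document; each statement's English description precedes it below -/
import Mathlib

section
/- Let m be a positive integer and let 𝒟(m) be any decomposition of m as a sum of Fibonacci Quilt numbers with nonnegative integer coefficients, m = c_1 q_1 + c_2 q_2 + … + c_n q_n with c_i ∈ {0, 1, 2, …}, whose number of summands is c_1 + c_2 + … + c_n. Then the number of summands of the Greedy-6 decomposition 𝒢(m) is at most the number of summands of 𝒟(m). -/
open scoped BigOperators

/-- A finite set of indices is FQ-legal: distinct indices never differ by 1, 3 or 4,
and the set does not contain both 1 and 3. -/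
def FQLegal (L : Finset ℕ) : Prop :=
  (∀ i ∈ L, ∀ j ∈ L, i ≠ j →
    max i j - min i j ≠ 1 ∧ max i j - min i j ≠ 3 ∧ max i j - min i j ≠ 4) ∧
  ¬ (1 ∈ L ∧ 3 ∈ L)

/-- `m` has an FQ-legal decomposition using only `q_1, …, q_{i-1}`. -/
def FQRepr (q : ℕ → ℕ) (i m : ℕ) : Prop :=
  ∃ L : Finset ℕ, (∀ j ∈ L, 1 ≤ j ∧ j < i) ∧ FQLegal L ∧ (∑ j ∈ L, q j) = m

/-- `q` (1-indexed) is the Fibonacci Quilt sequence: `q 1 = 1` and for `i ≥ 2`,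
`q i` is the smallest positive integer having no FQ-legal decomposition using
`{q_1, …, q_{i-1}}`. -/
def IsFQSeq (q : ℕ → ℕ) : Prop :=
  q 1 = 1 ∧ ∀ i, 2 ≤ i → IsLeast {m : ℕ | 0 < m ∧ ¬ FQRepr q i m} (q i)

/-- `IsGreedy6 q L m` : the list `L` (indices of summands, largest first) is the output of
the Greedy-6 algorithm on `m`: if `m = q n` stop with `[n]`; if `m = 6` output `[4, 2]`
(i.e. `q 4 + q 2`); otherwise, if `m ≥ q 6` and `m` is not a Fibonacci Quilt number,
take the index `ℓ` with `q ℓ < m < q (ℓ+1)` and recurse on `m - q ℓ`. -/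
def IsGreedy6 (q : ℕ → ℕ) : List ℕ → ℕ → Prop
  | [], m => m = 0
  | ℓ :: rest, m =>
      (rest = [] ∧ 1 ≤ ℓ ∧ m = q ℓ) ∨
      (m = 6 ∧ ℓ = 4 ∧ rest = [2]) ∨
      ((∀ n, 1 ≤ n → q n ≠ m) ∧ q 6 ≤ m ∧ 1 ≤ ℓ ∧ q ℓ < m ∧ m < q (ℓ + 1) ∧
        IsGreedy6 q rest (m - q ℓ))



/-- The Fibonacci Quilt sequence (with `Q 0 = 0` as a junk value). -/
def Q : ℕ → ℕ
  | 0 => 0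
  | 1 => 1
  | 2 => 2
  | 3 => 3
  | 4 => 4
  | 5 => 5
  | 6 => 7
  | (n+7) => Q (n+6) + Q (n+2)

lemma Q_rec1 (n : ℕ) : Q (n+7) = Q (n+6) + Q (n+2) := rfl

lemma Q_le_self : ∀ n, n ≤ Q n := by
  intro n
  induction n using Nat.strong_induction_on with
  | _ n IH =>
    match n with
    | 0 => simp [Q]
    | 1 => simp [Q]
    | 2 => simp [Q]
    | 3 => simp [Q]
    | 4 => simp [Q]
    | 5 => simp [Q]
    | 6 => simp [Q]
    | (k+7) =>
      have h1 := IH (k+6) (by omega)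
      have h2 := IH (k+2) (by omega)
      rw [Q_rec1]; omega

lemma Q_pos {n : ℕ} (h : 1 ≤ n) : 1 ≤ Q n := le_trans h (Q_le_self n)

lemma Q_succ_lt {n : ℕ} (h : 1 ≤ n) : Q n < Q (n+1) := by
  match n with
  | 1 => decide
  | 2 => decide
  | 3 => decide
  | 4 => decide
  | 5 => decide
  | (k+6) =>
    have := Q_pos (n := k+2) (by omega)
    rw [show k+6+1 = k+7 by rfl, Q_rec1]; omega

lemma Q_mono {a b : ℕ} (ha : 1 ≤ a) (hab : a ≤ b) : Q a ≤ Q b := by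
  induction b with
  | zero => omega
  | succ b IH =>
    rcases Nat.lt_or_ge a (b+1) with h | h
    · have hb : 1 ≤ b := by omega
      exact le_trans (IH (by omega)) (le_of_lt (Q_succ_lt hb))
    · have : a = b + 1 := by omega
      subst this; exact le_rfl

lemma Q_strict_mono {a b : ℕ} (ha : 1 ≤ a) (hab : a < b) : Q a < Q b :=
  lt_of_lt_of_le (Q_succ_lt ha) (Q_mono (by omega) hab)

/-- Second recurrence: `Q (n+6) = Q (n+4) + Q (n+3)`. -/
lemma Q_rec2 : ∀ n, Q (n+6) = Q (n+4) + Q (n+3) := by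
  intro n
  induction n using Nat.strong_induction_on with
  | _ n IH =>
    match n with
    | 0 => decide
    | 1 => decide
    | 2 => decide
    | (k+3) =>
      have h1 : Q (k+8) = Q (k+6) + Q (k+5) := IH (k+2) (by omega)
      have h2 : Q (k+7) = Q (k+5) + Q (k+4) := IH (k+1) (by omega)
      have e1 : Q (k+9) = Q (k+8) + Q (k+4) := Q_rec1 (k+2)
      have e4 : Q (k+7) = Q (k+6) + Q (k+2) := Q_rec1 k
      show Q (k+9) = Q (k+7) + Q (k+6)
      omega

lemma Q_diff1 (x : ℕ) (hx : 1 ≤ x) : ∃ j, 1 ≤ j ∧ j ≤ x ∧ Q (x+1) = Q x + Q j := by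
  match x with
  | 1 => exact ⟨1, by decide⟩
  | 2 => exact ⟨1, by decide⟩
  | 3 => exact ⟨1, by decide⟩
  | 4 => exact ⟨1, by decide⟩
  | 5 => exact ⟨2, by decide⟩
  | (k+6) => exact ⟨k+2, by omega, by omega, Q_rec1 k⟩

lemma Q_diff2 (x : ℕ) (hx : 1 ≤ x) : ∃ j, 1 ≤ j ∧ j ≤ x + 1 ∧ Q (x+2) = Q x + Q j := by
  match x with
  | 1 => exact ⟨2, by decide⟩
  | 2 => exact ⟨2, by decide⟩
  | 3 => exact ⟨2, by decide⟩
  | (k+4) => exact ⟨k+3, by omega, by omega, Q_rec2 k⟩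

lemma Q_diff3 (x : ℕ) (hx : 1 ≤ x) : ∃ j, 1 ≤ j ∧ j ≤ x + 2 ∧ Q (x+3) = Q x + Q j := by
  match x with
  | 1 => exact ⟨3, by decide⟩
  | 2 => exact ⟨3, by decide⟩
  | (k+3) =>
    exact ⟨k+4, by omega, by omega, by rw [show k+3+3 = k+6 by omega, Q_rec2 k]; omega⟩

/-- Decidable test: `m` is a Fibonacci Quilt number. -/
def isQb (m : ℕ) : Bool := (List.range (m+1)).any fun n => decide (1 ≤ n) && decide (Q n = m)

lemma isQb_iff {m : ℕ} : isQb m = true ↔ ∃ n, 1 ≤ n ∧ Q n = m := by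
  unfold isQb
  rw [List.any_eq_true]
  constructor
  · rintro ⟨n, _, h⟩
    simp only [Bool.and_eq_true, decide_eq_true_eq] at h
    exact ⟨n, h.1, h.2⟩
  · rintro ⟨n, h1, h2⟩
    refine ⟨n, ?_, by simp [h1, h2]⟩
    have := Q_le_self n
    exact List.mem_range.2 (by omega)

lemma isQb_Q {n : ℕ} (h : 1 ≤ n) : isQb (Q n) = true := isQb_iff.2 ⟨n, h, rfl⟩

lemma not_isQb_between {a m : ℕ} (ha : 1 ≤ a) (h1 : Q a < m) (h2 : m < Q (a+1)) :
    isQb m = false := by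
  by_contra h
  have h' : isQb m = true := by revert h; cases isQb m <;> simp
  obtain ⟨n, hn, hQ⟩ := isQb_iff.1 h'
  rcases le_or_gt n a with h3 | h3
  · have := Q_mono hn h3; omega
  · have := Q_mono (by omega : 1 ≤ a + 1) h3; omega

/-- Index of the largest quilt number `< m`. -/
def lidx (m : ℕ) : ℕ := Nat.findGreatest (fun ℓ => Q ℓ < m) m

lemma lidx_eq {ℓ m : ℕ} (h1 : 1 ≤ ℓ) (h2 : Q ℓ < m) (h3 : m ≤ Q (ℓ+1)) : lidx m = ℓ := by
  have hl : ℓ ≤ m := le_trans (Q_le_self ℓ) (le_of_lt h2)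
  have hge : ℓ ≤ lidx m := Nat.le_findGreatest hl h2
  by_contra hne
  have hgt : ℓ < lidx m := by omega
  have hsp : Q (lidx m) < m := Nat.findGreatest_spec (P := fun ℓ => Q ℓ < m) hl h2
  have : Q (ℓ+1) ≤ Q (lidx m) := Q_mono (by omega) (by omega)
  omega

lemma lidx_ge_one {m : ℕ} (h : 2 ≤ m) : 1 ≤ lidx m :=
  Nat.le_findGreatest (by omega) (by show Q 1 < m; simp [Q]; omega)

lemma lidx_spec {m : ℕ} (h : 2 ≤ m) : Q (lidx m) < m ∧ m ≤ Q (lidx m + 1) := by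
  have hP : Q 1 < m := by simp [Q]; omega
  have hsp := Nat.findGreatest_spec (P := fun ℓ => Q ℓ < m) (n := m) (by omega) hP
  have hle := Nat.findGreatest_le (P := fun ℓ => Q ℓ < m) m
  show Q (Nat.findGreatest (fun ℓ => Q ℓ < m) m) < m ∧
    m ≤ Q (Nat.findGreatest (fun ℓ => Q ℓ < m) m + 1)
  set g := Nat.findGreatest (fun ℓ => Q ℓ < m) m with hg
  refine ⟨hsp, ?_⟩
  have hne : g ≠ m := by
    intro he
    have := Q_le_self m
    rw [he] at hsp; omega
  have hgr := Nat.findGreatest_is_greatest (P := fun ℓ => Q ℓ < m) (n := m)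
      (k := g + 1) (by omega) (by omega)
  simp only [not_lt] at hgr
  exact hgr

/-- Greedy length with fuel. -/
def glF : ℕ → ℕ → ℕ
  | 0, _ => 0
  | (f+1), m =>
      if m = 0 then 0 else if isQb m then 1 else if m = 6 then 2
      else glF f (m - Q (lidx m)) + 1

/-- Number of summands of the Greedy-6 decomposition. -/
def gl (m : ℕ) : ℕ := glF m m

lemma glF_congr : ∀ m f f', m ≤ f → m ≤ f' → glF f m = glF f' m := by
  intro m
  induction m using Nat.strong_induction_on with
  | _ m IH =>
    intro f f' hf hf'
    match m with
    | 0 =>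
      match f, f' with
      | 0, 0 => rfl
      | 0, (b+1) => simp [glF]
      | (a+1), 0 => simp [glF]
      | (a+1), (b+1) => simp [glF]
    | (m+1) =>
      obtain ⟨a, rfl⟩ : ∃ a, f = a + 1 := ⟨f - 1, by omega⟩
      obtain ⟨b, rfl⟩ : ∃ b, f' = b + 1 := ⟨f' - 1, by omega⟩
      show glF (a+1) (m+1) = glF (b+1) (m+1)
      unfold glF
      rcases em (isQb (m+1) = true) with h | h
      · simp [h]
      · simp only [if_neg (by omega : ¬ m + 1 = 0), h]
        rcases em (m + 1 = 6) with h6 | h6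
        · simp [h6]
        · simp only [if_neg h6, Bool.false_eq_true, if_false]
          have h2 : 2 ≤ m + 1 := by
            rcases Nat.lt_or_ge (m+1) 2 with hh | hh
            · exfalso
              have : m = 0 := by omega
              subst this
              exact h (by decide)
            · exact hh
          have hlt : Q (lidx (m+1)) < m + 1 := (lidx_spec h2).1
          have hpos : 1 ≤ Q (lidx (m+1)) := Q_pos (lidx_ge_one h2)
          have hm' : m + 1 - Q (lidx (m+1)) < m + 1 := by omega
          rw [IH _ hm' a b (by omega) (by omega)]

lemma gl_zero : gl 0 = 0 := rfl

lemma gl_quilt {m : ℕ} (h : isQb m = true) : gl m = 1 := by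
  have hpos : m ≠ 0 := by
    intro he; subst he; exact absurd h (by decide)
  obtain ⟨k, rfl⟩ : ∃ k, m = k + 1 := ⟨m - 1, by omega⟩
  show glF (k+1) (k+1) = 1
  unfold glF
  simp [h]

lemma gl_six : gl 6 = 2 := by decide

lemma gl_step {m : ℕ} (h0 : m ≠ 0) (h : isQb m = false) (h6 : m ≠ 6) :
    gl m = gl (m - Q (lidx m)) + 1 := by
  obtain ⟨k, rfl⟩ : ∃ k, m = k + 1 := ⟨m - 1, by omega⟩
  show glF (k+1) (k+1) = _
  unfold glF
  simp only [if_neg (by omega : ¬ k + 1 = 0), h, Bool.false_eq_true, if_false, if_neg h6]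
  congr 1
  have h2 : 2 ≤ k + 1 := by
    rcases Nat.lt_or_ge (k+1) 2 with hh | hh
    · exfalso
      have : k = 0 := by omega
      subst this
      exact absurd h (by decide)
    · exact hh
  have hlt : Q (lidx (k+1)) < k + 1 := (lidx_spec h2).1
  have hpos : 1 ≤ Q (lidx (k+1)) := Q_pos (lidx_ge_one h2)
  exact glF_congr _ _ _ (by omega) (by omega)

lemma gl_step' {m ℓ : ℕ} (h1 : 1 ≤ ℓ) (h2 : Q ℓ < m) (h3 : m < Q (ℓ+1)) (h6 : m ≠ 6) :
    gl m = gl (m - Q ℓ) + 1 := by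
  have hq : isQb m = false := not_isQb_between h1 h2 h3
  have := gl_step (by omega) hq h6
  rwa [lidx_eq h1 h2 (le_of_lt h3)] at this

lemma gl_two {a b : ℕ} (ha : 1 ≤ a) (hb : 1 ≤ b) (hlt : Q a + Q b < Q (a+1)) :
    gl (Q a + Q b) ≤ 2 := by
  have hpb : 1 ≤ Q b := Q_pos hb
  rcases em (isQb (Q a + Q b) = true) with h | h
  · rw [gl_quilt h]; omega
  · have h' : isQb (Q a + Q b) = false := by revert h; cases isQb (Q a + Q b) <;> simp
    rcases em (Q a + Q b = 6) with h6 | h6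
    · rw [h6, gl_six]
    · rw [gl_step' ha (by omega) hlt h6]
      have : Q a + Q b - Q a = Q b := by omega
      rw [this, gl_quilt (isQb_Q hb)]

lemma gl_addQ_le_two : ∀ n i, 1 ≤ i → i ≤ n → gl (Q n + Q i) ≤ 2 := by
  have base : ∀ n < 10, ∀ i < 10, 1 ≤ i → i ≤ n → gl (Q n + Q i) ≤ 2 := by decide
  intro n i hi hin
  rcases Nat.lt_or_ge n 10 with hn | hn
  · exact base n hn i (by omega) hi hin
  obtain ⟨a, rfl⟩ : ∃ a, n = a + 10 := ⟨n - 10, by omega⟩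
  have e1 : Q (a+11) = Q (a+10) + Q (a+6) := Q_rec1 (a+4)
  have e2 : Q (a+12) = Q (a+11) + Q (a+7) := Q_rec1 (a+5)
  have e3 : Q (a+12) = Q (a+10) + Q (a+9) := Q_rec2 (a+6)
  have e4 : Q (a+13) = Q (a+12) + Q (a+8) := Q_rec1 (a+6)
  rcases Nat.lt_or_ge i (a+5) with hc | hc
  · refine gl_two (by omega) hi ?_
    show Q (a+10) + Q i < Q (a+11)
    have h2 : Q i ≤ Q (a+4) := Q_mono hi (by omega)
    have h3 : Q (a+4) < Q (a+6) := Q_strict_mono (by omega) (by omega)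
    omega
  have hcase : i = a+5 ∨ i = a+6 ∨ i = a+7 ∨ i = a+8 ∨ i = a+9 ∨ i = a+10 := by omega
  rcases hcase with rfl | rfl | rfl | rfl | rfl | rfl
  · refine gl_two (by omega) hi ?_
    show Q (a+10) + Q (a+5) < Q (a+11)
    have h3 : Q (a+5) < Q (a+6) := Q_strict_mono (by omega) (by omega)
    omega
  · rw [show Q (a+10) + Q (a+6) = Q (a+11) from e1.symm, gl_quilt (isQb_Q (by omega))]
    omega
  · obtain ⟨j, hj1, hj2, hj3⟩ := Q_diff1 (a+6) (by omega)
    rw [show Q (a+10) + Q (a+7) = Q (a+11) + Q j by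
      have : Q (a+6+1) = Q (a+6) + Q j := hj3
      have h7 : Q (a+6+1) = Q (a+7) := rfl
      omega]
    refine gl_two (by omega) hj1 ?_
    show Q (a+11) + Q j < Q (a+12)
    have hj4 : Q (a+6+1) = Q (a+6) + Q j := hj3
    have h7 : Q (a+6+1) = Q (a+7) := rfl
    have h4 : 1 ≤ Q (a+6) := Q_pos (by omega)
    omega
  · obtain ⟨j, hj1, hj2, hj3⟩ := Q_diff2 (a+6) (by omega)
    have hj4 : Q (a+8) = Q (a+6) + Q j := by
      have h8 : Q (a+6+2) = Q (a+8) := rfl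
      omega
    rw [show Q (a+10) + Q (a+8) = Q (a+11) + Q j by omega]
    refine gl_two (by omega) hj1 ?_
    show Q (a+11) + Q j < Q (a+12)
    have h4 : Q (a+8) = Q (a+6) + Q (a+5) := Q_rec2 (a+2)
    have h5 : Q (a+5) < Q (a+7) := Q_strict_mono (by omega) (by omega)
    omega
  · rw [show Q (a+10) + Q (a+9) = Q (a+12) from e3.symm, gl_quilt (isQb_Q (by omega))]
    omega
  · obtain ⟨j, hj1, hj2, hj3⟩ := Q_diff1 (a+9) (by omega)
    have hj4 : Q (a+10) = Q (a+9) + Q j := by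
      have h10 : Q (a+9+1) = Q (a+10) := rfl
      omega
    rw [show Q (a+10) + Q (a+10) = Q (a+12) + Q j by omega]
    refine gl_two (by omega) hj1 ?_
    show Q (a+12) + Q j < Q (a+13)
    have h4 : Q (a+11) = Q (a+9) + Q (a+8) := Q_rec2 (a+5)
    have h5 : Q (a+10) < Q (a+11) := Q_strict_mono (by omega) (by omega)
    omega

lemma gl_six_add : ∀ i, 1 ≤ i → gl (6 + Q i) ≤ 3 := by
  have base : ∀ i < 11, 1 ≤ i → gl (6 + Q i) ≤ 3 := by decide
  intro i hi
  rcases Nat.lt_or_ge i 11 with h | h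
  · exact base i h hi
  obtain ⟨a, rfl⟩ : ∃ a, i = a + 11 := ⟨i - 11, by omega⟩
  have h1 : Q (a+12) = Q (a+11) + Q (a+7) := Q_rec1 (a+5)
  have h2 : Q 7 ≤ Q (a+7) := Q_mono (by omega) (by omega)
  have h7 : Q 7 = 9 := by decide
  have hstep := gl_step' (m := 6 + Q (a+11)) (ℓ := a+11) (by omega)
    (by have := Q_pos (n := a+11) (by omega); omega)
    (by show 6 + Q (a+11) < Q (a+12); omega)
    (by have := Q_pos (n := a+11) (by omega); omega)
  rw [hstep, show 6 + Q (a+11) - Q (a+11) = 6 by omega, gl_six]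

lemma gl_pos {m : ℕ} (h : m ≠ 0) : 1 ≤ gl m := by
  rcases em (isQb m = true) with hq | hq
  · rw [gl_quilt hq]
  · have hq' : isQb m = false := by revert hq; cases isQb m <;> simp
    rcases em (m = 6) with h6 | h6
    · rw [h6, gl_six]; omega
    · rw [gl_step h hq' h6]; omega

lemma isQb_false_of_ne {m : ℕ} (h : ¬ isQb m = true) : isQb m = false := by
  revert h; cases isQb m <;> simp

/-- If `Q c < u < Q (c+3)`, subtracting `Q c` does not increase greedy length,
assuming the key inequality holds below `u`. -/
lemma gl_sub_le {u c : ℕ} (hc : 1 ≤ c) (hgt : Q c < u) (hlt : u < Q (c+3))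
    (HIH : ∀ m' j, 1 ≤ j → m' + Q j < u → gl (m' + Q j) ≤ gl m' + 1) :
    gl (u - Q c) ≤ gl u := by
  have hQc : 1 ≤ Q c := Q_pos hc
  rcases em (u = 6) with h6 | h6
  · subst h6
    have hsmall : ∀ t ≤ 5, 1 ≤ t → gl t = 1 := by decide
    rw [gl_six, hsmall (6 - Q c) (by omega) (by omega)]; omega
  rcases em (isQb u = true) with hq | hq
  · obtain ⟨k, hk1, hk2⟩ := isQb_iff.1 hq
    have hk3 : c + 1 ≤ k := by
      by_contra h
      have : Q k ≤ Q c := Q_mono hk1 (by omega); omega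
    have hk4 : k ≤ c + 2 := by
      by_contra h
      have : Q (c+3) ≤ Q k := Q_mono (by omega) (by omega); omega
    rw [gl_quilt hq]
    rcases (by omega : k = c + 1 ∨ k = c + 2) with rfl | rfl
    · obtain ⟨j, hj1, _, hj3⟩ := Q_diff1 c hc
      rw [show u - Q c = Q j by omega, gl_quilt (isQb_Q hj1)]
    · obtain ⟨j, hj1, _, hj3⟩ := Q_diff2 c hc
      rw [show u - Q c = Q j by omega, gl_quilt (isQb_Q hj1)]
  have hq' : isQb u = false := isQb_false_of_ne hq
  rcases lt_trichotomy u (Q (c+1)) with h1 | h1 | h1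
  · rw [gl_step' hc hgt h1 h6]; omega
  · exact absurd (h1 ▸ isQb_Q (show 1 ≤ c+1 by omega)) (by rw [hq']; simp)
  rcases lt_trichotomy u (Q (c+2)) with h2 | h2 | h2
  · rw [gl_step' (by omega : 1 ≤ c+1) h1 h2 h6]
    obtain ⟨j, hj1, _, hj3⟩ := Q_diff1 c hc
    have ht : u - Q c = (u - Q (c+1)) + Q j := by omega
    rw [ht]
    exact HIH _ j hj1 (by omega)
  · exact absurd (h2 ▸ isQb_Q (show 1 ≤ c+2 by omega)) (by rw [hq']; simp)
  · rw [gl_step' (by omega : 1 ≤ c+2) h2 hlt h6]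
    obtain ⟨j, hj1, _, hj3⟩ := Q_diff2 c hc
    have ht : u - Q c = (u - Q (c+2)) + Q j := by omega
    rw [ht]
    exact HIH _ j hj1 (by omega)

/-- Key lemma: adding one quilt number increases greedy length by at most one. -/
lemma KL : ∀ M m i, 1 ≤ i → m + Q i ≤ M → gl (m + Q i) ≤ gl m + 1 := by
  intro M
  induction M using Nat.strong_induction_on with
  | _ M IH =>
  intro m i hi hM
  have hQi : 1 ≤ Q i := Q_pos hi
  -- easy cases on the sum
  rcases em (isQb (m + Q i) = true) with hs | hs
  · rw [gl_quilt hs]; omega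
  have hs' : isQb (m + Q i) = false := isQb_false_of_ne hs
  rcases Nat.eq_zero_or_pos m with rfl | hm
  · exfalso
    rw [Nat.zero_add] at hs'
    have hQ := isQb_Q hi
    rw [hs'] at hQ
    simp at hQ
  rcases em (m + Q i = 6) with hs6 | hs6
  · rw [hs6, gl_six]
    have := gl_pos (show m ≠ 0 by omega); omega
  -- cases on m
  rcases em (isQb m = true) with hq | hq
  · obtain ⟨k, hk1, hk2⟩ := isQb_iff.1 hq
    rw [gl_quilt hq]
    subst hk2
    rcases le_total i k with h | h
    · exact gl_addQ_le_two k i hi h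
    · rw [Nat.add_comm]; exact gl_addQ_le_two i k hk1 h
  have hq' : isQb m = false := isQb_false_of_ne hq
  rcases em (m = 6) with rfl | h6
  · rw [gl_six]; exact gl_six_add i hi
  have hm8 : 8 ≤ m := by
    have hsmall : ∀ m' < 8, m' ≠ 0 → m' ≠ 6 → isQb m' = true := by decide
    by_contra h
    have := hsmall m (by omega) (by omega) h6
    rw [hq'] at this; simp at this
  obtain ⟨b, hℓ⟩ : ∃ b, lidx m = b + 6 := by
    have hspec := lidx_spec (show 2 ≤ m by omega)
    refine ⟨lidx m - 6, ?_⟩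
    have h7 : Q 7 = 9 := by decide
    by_contra h
    have h5 : lidx m + 1 ≤ 6 := by omega
    have : Q (lidx m + 1) ≤ Q 6 := Q_mono (by omega) (by omega)
    have h66 : Q 6 = 7 := by decide
    omega
  have hspec := lidx_spec (show 2 ≤ m by omega)
  rw [hℓ] at hspec
  have hmgt : Q (b+6) < m := hspec.1
  have hmlt : m < Q (b+7) := by
    rcases lt_or_eq_of_le hspec.2 with h | h
    · exact h
    · exact absurd (h ▸ isQb_Q (show 1 ≤ b+7 by omega)) (by rw [hq']; simp)
  have eA : Q (b+7) = Q (b+6) + Q (b+2) := Q_rec1 b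
  have eB : Q (b+8) = Q (b+6) + Q (b+5) := Q_rec2 (b+2)
  have eC : Q (b+9) = Q (b+7) + Q (b+6) := Q_rec2 (b+3)
  set r := m - Q (b+6) with hr
  have hrm : r < m := by have := Q_pos (show 1 ≤ b+6 by omega); omega
  have hglm : gl m = gl r + 1 := gl_step' (by omega) hmgt hmlt h6
  rw [hglm]
  have HIHr : gl (r + Q i) ≤ gl r + 1 :=
    IH (r + Q i) (by omega) r i hi le_rfl
  rcases le_or_gt i (b+6) with hiℓ | hiℓ
  · -- Case A : i ≤ ℓ
    have hQi_le : Q i ≤ Q (b+6) := Q_mono hi hiℓ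
    have hu_lt : r + Q i < Q (b+7) := by omega
    have HIH : ∀ m' j, 1 ≤ j → m' + Q j < r + Q i → gl (m' + Q j) ≤ gl m' + 1 :=
      fun m' j hj hlt => IH (m' + Q j) (by omega) m' j hj le_rfl
    rcases lt_trichotomy (m + Q i) (Q (b+7)) with h1 | h1 | h1
    · rw [gl_step' (show 1 ≤ b+6 by omega) (by omega) h1 hs6,
        show m + Q i - Q (b+6) = r + Q i by omega]
      omega
    · exact absurd (h1 ▸ isQb_Q (show 1 ≤ b+7 by omega)) (by rw [hs']; simp)
    rcases lt_trichotomy (m + Q i) (Q (b+8)) with h2 | h2 | h2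
    · -- greedy on the sum picks ℓ+1
      rw [gl_step' (show 1 ≤ b+7 by omega) h1 h2 hs6,
        show m + Q i - Q (b+7) = (r + Q i) - Q (b+2) by omega]
      have hsub : gl ((r + Q i) - Q (b+2)) ≤ gl (r + Q i) := by
        refine gl_sub_le (by omega) (by omega) ?_ HIH
        show r + Q i < Q (b+5)
        omega
      omega
    · exact absurd (h2 ▸ isQb_Q (show 1 ≤ b+8 by omega)) (by rw [hs']; simp)
    · -- greedy on the sum picks ℓ+2
      have h3 : m + Q i < Q (b+9) := by omega
      rw [gl_step' (show 1 ≤ b+8 by omega) h2 h3 hs6,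
        show m + Q i - Q (b+8) = (r + Q i) - Q (b+5) by omega]
      have hsub : gl ((r + Q i) - Q (b+5)) ≤ gl (r + Q i) := by
        refine gl_sub_le (by omega) (by omega) ?_ HIH
        show r + Q i < Q (b+8)
        have : Q (b+7) < Q (b+8) := Q_strict_mono (by omega) (by omega)
        omega
      omega
  · -- Case B : ℓ < i
    obtain ⟨d, rfl⟩ : ∃ d, i = d + 7 := ⟨i - 7, by omega⟩
    have hQml : m < Q (d+7) := lt_of_lt_of_le hmlt (Q_mono (by omega) (by omega))
    have fA : Q (d+8) = Q (d+7) + Q (d+3) := Q_rec1 (d+1)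
    have fB : Q (d+9) = Q (d+7) + Q (d+6) := Q_rec2 (d+3)
    have fC : Q (d+10) = Q (d+8) + Q (d+7) := Q_rec2 (d+4)
    rcases lt_trichotomy (m + Q (d+7)) (Q (d+8)) with h1 | h1 | h1
    · rw [gl_step' (show 1 ≤ d+7 by omega) (by omega) h1 hs6,
        show m + Q (d+7) - Q (d+7) = m by omega, hglm]
    · exact absurd (h1 ▸ isQb_Q (show 1 ≤ d+8 by omega)) (by rw [hs']; simp)
    rcases lt_trichotomy (m + Q (d+7)) (Q (d+9)) with h2 | h2 | h2
    · -- greedy picks i+1 ; then Q(d+3) < m < Q(d+6)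
      rw [gl_step' (show 1 ≤ d+8 by omega) h1 h2 hs6,
        show m + Q (d+7) - Q (d+8) = m - Q (d+3) by omega]
      have hd3 : Q (d+3) < m := by omega
      have hd6 : m < Q (d+6) := by omega
      have hbd1 : d + 3 ≤ b + 6 := by
        by_contra h
        have : Q (b+7) ≤ Q (d+3) := Q_mono (by omega) (by omega); omega
      have hbd2 : b + 6 ≤ d + 5 := by
        by_contra h
        have : Q (d+6) ≤ Q (b+6) := Q_mono (by omega) (by omega); omega
      rcases (by omega : b + 6 = d + 3 ∨ b + 6 = d + 4 ∨ b + 6 = d + 5) with he | he | he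
      · rw [show m - Q (d+3) = r by rw [hr, he]]
        omega
      · obtain ⟨j, hj1, hj2, hj3⟩ := Q_diff1 (d+3) (by omega)
        have hj3' : Q (d+4) = Q (d+3) + Q j := hj3
        rw [he] at hr
        have hrr : m - Q (d+3) = r + Q j := by omega
        rw [hrr]
        have : gl (r + Q j) ≤ gl r + 1 := by
          refine IH (r + Q j) ?_ r j hj1 le_rfl
          have : Q j ≤ Q (d+4) := Q_mono hj1 (by omega)
          have : Q (d+4) < Q (d+7) := Q_strict_mono (by omega) (by omega)
          omega
        omega
      · obtain ⟨j, hj1, hj2, hj3⟩ := Q_diff2 (d+3) (by omega)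
        have hj3' : Q (d+5) = Q (d+3) + Q j := hj3
        rw [he] at hr
        have hrr : m - Q (d+3) = r + Q j := by omega
        rw [hrr]
        have : gl (r + Q j) ≤ gl r + 1 := by
          refine IH (r + Q j) ?_ r j hj1 le_rfl
          have : Q j ≤ Q (d+4) := Q_mono hj1 (by omega)
          have : Q (d+4) < Q (d+7) := Q_strict_mono (by omega) (by omega)
          omega
        omega
    · exact absurd (h2 ▸ isQb_Q (show 1 ≤ d+9 by omega)) (by rw [hs']; simp)
    · -- greedy picks i+2 ; then ℓ = i-1
      have hd6 : Q (d+6) < m := by omega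
      have hbe : b + 6 = d + 6 := by
        have h4 : d + 6 ≤ b + 6 := by
          by_contra h
          have : Q (d+6) ≥ Q (b+7) := Q_mono (by omega) (by omega); omega
        omega
      have h3 : m + Q (d+7) < Q (d+10) := by
        have : m < Q (d+7) := hQml
        have : Q (d+7) < Q (d+8) := Q_strict_mono (by omega) (by omega)
        omega
      rw [gl_step' (show 1 ≤ d+9 by omega) h2 h3 hs6,
        show m + Q (d+7) - Q (d+9) = m - Q (d+6) by omega,
        show m - Q (d+6) = r by rw [hr, hbe]]
      omega
instance : DecidablePred FQLegal := fun L => by unfold FQLegal; infer_instance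

lemma FQLegal_subset {L L' : Finset ℕ} (h : L' ⊆ L) (hL : FQLegal L) : FQLegal L' :=
  ⟨fun i hi j hj hij => hL.1 i (h hi) j (h hj) hij, fun hh => hL.2 ⟨h hh.1, h hh.2⟩⟩

lemma FQLegal_singleton (x : ℕ) : FQLegal {x} := by
  refine ⟨?_, ?_⟩
  · intro i hi j hj hij
    exfalso
    rw [Finset.mem_singleton] at hi hj
    exact hij (hi.trans hj.symm)
  · rintro ⟨h1, h3⟩
    rw [Finset.mem_singleton] at h1 h3
    omega

set_option maxRecDepth 100000 in
/-- Maximal legal sums are bounded. -/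
lemma maxsum : ∀ k, ∀ L : Finset ℕ, (∀ j ∈ L, 1 ≤ j ∧ j ≤ k) → FQLegal L →
    ∑ j ∈ L, Q j < Q (k+3) := by
  have base : ∀ k < 8, ∀ L ∈ (Finset.Icc 1 k).powerset, FQLegal L → ∑ j ∈ L, Q j < Q (k+3) := by
    decide
  intro k
  induction k using Nat.strong_induction_on with
  | _ k IH =>
  intro L hb hleg
  rcases Nat.lt_or_ge k 8 with hk | hk
  · refine base k hk L ?_ hleg
    rw [Finset.mem_powerset]
    intro x hx
    rw [Finset.mem_Icc]
    exact (hb x hx).imp id id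
  obtain ⟨e, rfl⟩ : ∃ e, k = e + 8 := ⟨k - 8, by omega⟩
  show ∑ j ∈ L, Q j < Q (e+11)
  have eq1 : Q (e+11) = Q (e+9) + Q (e+8) := Q_rec2 (e+5)
  have eq2 : Q (e+9) = Q (e+8) + Q (e+4) := Q_rec1 (e+2)
  rcases em (e + 8 ∈ L) with hkL | hkL
  swap
  · have hb' : ∀ j ∈ L, 1 ≤ j ∧ j ≤ e + 7 := by
      intro j hj
      have h2 := hb j hj
      have : j ≠ e + 8 := fun he => hkL (he ▸ hj)
      omega
    have h1 : ∑ j ∈ L, Q j < Q (e+10) := IH (e+7) (by omega) L hb' hleg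
    have : Q (e+10) < Q (e+11) := Q_strict_mono (by omega) (by omega)
    omega
  · have hL' : ∑ j ∈ L, Q j = Q (e+8) + ∑ j ∈ L.erase (e+8), Q j :=
      (Finset.add_sum_erase _ _ hkL).symm
    have hmem' : ∀ x ∈ L.erase (e+8), x = e + 6 ∨ x ≤ e + 3 := by
      intro x hx
      have hxL := Finset.mem_of_mem_erase hx
      have hxne := Finset.ne_of_mem_erase hx
      have hbx := hb x hxL
      have := hleg.1 x hxL (e+8) hkL hxne
      omega
    rcases em (e + 6 ∈ L.erase (e+8)) with h6L | h6L
    · have hL'' : ∑ j ∈ L.erase (e+8), Q j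
          = Q (e+6) + ∑ j ∈ (L.erase (e+8)).erase (e+6), Q j :=
        (Finset.add_sum_erase _ _ h6L).symm
      have hmem'' : ∀ x ∈ (L.erase (e+8)).erase (e+6), 1 ≤ x ∧ x ≤ e + 1 := by
        intro x hx
        have hx6 := Finset.ne_of_mem_erase hx
        have hx' := Finset.mem_of_mem_erase hx
        have hxL := Finset.mem_of_mem_erase hx'
        have hbx := hb x hxL
        have h1 := hmem' x hx'
        have := hleg.1 x hxL (e+6) (Finset.mem_of_mem_erase h6L) hx6
        omega
      have hIH : ∑ j ∈ (L.erase (e+8)).erase (e+6), Q j < Q (e+4) :=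
        IH (e+1) (by omega) _ hmem''
          (FQLegal_subset (Finset.Subset.trans (Finset.erase_subset _ _) (Finset.erase_subset _ _)) hleg)
      have hm1 : Q (e+6) < Q (e+8) := Q_strict_mono (by omega) (by omega)
      omega
    · have hmem2 : ∀ x ∈ L.erase (e+8), 1 ≤ x ∧ x ≤ e + 3 := by
        intro x hx
        have hxL := Finset.mem_of_mem_erase hx
        have hbx := hb x hxL
        rcases hmem' x hx with h | h
        · exact absurd (h ▸ hx) h6L
        · exact ⟨hbx.1, h⟩
      have hIH : ∑ j ∈ L.erase (e+8), Q j < Q (e+6) :=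
        IH (e+3) (by omega) _ hmem2
          (FQLegal_subset (Finset.erase_subset _ _) hleg)
      have hm1 : Q (e+6) < Q (e+9) := Q_strict_mono (by omega) (by omega)
      omega

/-- Every positive integer below `Q i` has a legal representation with indices `< i`. -/
lemma repr_all : ∀ i, 2 ≤ i → ∀ m, 0 < m → m < Q i →
    ∃ L : Finset ℕ, (∀ j ∈ L, 1 ≤ j ∧ j < i) ∧ FQLegal L ∧ ∑ j ∈ L, Q j = m := by
  intro i
  induction i using Nat.strong_induction_on with
  | _ i IH =>
  intro hi2 m hm hmQ
  rcases em (i = 2) with rfl | hne2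
  · have hm1 : m = 1 := by
      have : Q 2 = 2 := rfl
      omega
    refine ⟨{1}, ?_, FQLegal_singleton 1, ?_⟩
    · intro j hj; rw [Finset.mem_singleton] at hj; omega
    · rw [Finset.sum_singleton]; simp [Q, hm1]
  have hi3 : 3 ≤ i := by omega
  obtain ⟨f, rfl⟩ : ∃ f, i = f + 3 := ⟨i - 3, by omega⟩
  rcases lt_trichotomy m (Q (f+2)) with h | h | h
  · obtain ⟨L, hb, hleg, hsum⟩ := IH (f+2) (by omega) (by omega) m hm h
    exact ⟨L, fun j hj => ⟨(hb j hj).1, by have := (hb j hj).2; omega⟩, hleg, hsum⟩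
  · refine ⟨{f+2}, ?_, FQLegal_singleton _, ?_⟩
    · intro j hj; rw [Finset.mem_singleton] at hj; omega
    · rw [Finset.sum_singleton, h]
  · -- Q (f+2) < m < Q (f+3)
    rcases Nat.lt_or_ge f 4 with hf | hf
    · -- small i : the only case is m = 6 with i = 6
      rcases (by omega : f = 0 ∨ f = 1 ∨ f = 2 ∨ f = 3) with rfl | rfl | rfl | rfl
      · exfalso
        have h1 : Q (0+2) = 2 := rfl
        have h2 : Q (0+3) = 3 := rfl
        omega
      · exfalso
        have h1 : Q (1+2) = 3 := rfl
        have h2 : Q (1+3) = 4 := rfl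
        omega
      · exfalso
        have h1 : Q (2+2) = 4 := rfl
        have h2 : Q (2+3) = 5 := rfl
        omega
      · -- i = 6, Q 5 = 5 < m < Q 6 = 7
        have hm6 : m = 6 := by
          have h5 : Q (3+2) = 5 := rfl
          have h6 : Q (3+3) = 7 := rfl
          omega
        refine ⟨{2, 4}, ?_, by decide, ?_⟩
        · intro j hj
          simp only [Finset.mem_insert, Finset.mem_singleton] at hj
          omega
        · rw [hm6]; decide
    · -- i = f + 3 ≥ 7
      obtain ⟨e, rfl⟩ : ∃ e, f = e + 4 := ⟨f - 4, by omega⟩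
      -- Q (e+6) < m < Q (e+7)
      have hmQ' : m < Q (e+7) := hmQ
      have h' : Q (e+6) < m := h
      have eq1 : Q (e+7) = Q (e+6) + Q (e+2) := Q_rec1 e
      have hr1 : 0 < m - Q (e+6) := by omega
      have hr2 : m - Q (e+6) < Q (e+2) := by omega
      obtain ⟨L', hb', hleg', hsum'⟩ := IH (e+2) (by omega) (by omega) _ hr1 hr2
      have hnotmem : e + 6 ∉ L' := by
        intro h
        have := hb' _ h; omega
      refine ⟨insert (e+6) L', ?_, ?_, ?_⟩
      · intro j hj
        rcases Finset.mem_insert.1 hj with rfl | hj'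
        · omega
        · have := hb' j hj'; omega
      · refine ⟨?_, ?_⟩
        · intro x hx y hy hxy
          rcases Finset.mem_insert.1 hx with rfl | hx' <;>
            rcases Finset.mem_insert.1 hy with h' | hy'
          · omega
          · have := hb' y hy'; omega
          · rw [h'] at hxy ⊢
            have := hb' x hx'; omega
          · exact hleg'.1 x hx' y hy' hxy
        · rintro ⟨h1, h3⟩
          rcases Finset.mem_insert.1 h1 with h1' | h1'
          · omega
          rcases Finset.mem_insert.1 h3 with h3' | h3'
          · omega
          exact hleg'.2 ⟨h1', h3'⟩
      · rw [Finset.sum_insert hnotmem, hsum']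
        omega

set_option maxRecDepth 100000 in
/-- `Q i` has no legal representation with indices `< i`. -/
lemma no_repr : ∀ i, 2 ≤ i → ∀ L : Finset ℕ, (∀ j ∈ L, 1 ≤ j ∧ j < i) → FQLegal L →
    ∑ j ∈ L, Q j ≠ Q i := by
  have base : ∀ i < 11, 2 ≤ i → ∀ L ∈ (Finset.Icc 1 (i-1)).powerset,
      FQLegal L → ∑ j ∈ L, Q j ≠ Q i := by decide
  intro i
  induction i using Nat.strong_induction_on with
  | _ i IH =>
  intro hi2 L hb hleg hsum
  rcases Nat.lt_or_ge i 11 with hi | hi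
  · refine base i hi hi2 L ?_ hleg hsum
    rw [Finset.mem_powerset]
    intro x hx
    rw [Finset.mem_Icc]
    have := hb x hx; omega
  obtain ⟨e, rfl⟩ : ∃ e, i = e + 11 := ⟨i - 11, by omega⟩
  have hQpos : 0 < Q (e+11) := Q_pos (by omega)
  have hne : L.Nonempty := by
    rcases Finset.eq_empty_or_nonempty L with rfl | h
    · rw [Finset.sum_empty] at hsum; omega
    · exact h
  set j := L.max' hne with hj
  have hjmem : j ∈ L := L.max'_mem hne
  have hjmax : ∀ x ∈ L, x ≤ j := fun x hx => L.le_max' x hx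
  have hbj := hb j hjmem
  rcases (by omega : j ≤ e + 8 ∨ j = e + 9 ∨ j = e + 10) with hc | hc | hc
  · have : ∑ x ∈ L, Q x < Q (e+11) := by
      have := maxsum (e+8) L (fun x hx => ⟨(hb x hx).1, by have := hjmax x hx; omega⟩) hleg
      exact this
    omega
  · -- j = i - 2
    have eq1 : Q (e+11) = Q (e+9) + Q (e+8) := Q_rec2 (e+5)
    have hsum' : ∑ x ∈ L.erase (e+9), Q x = Q (e+8) := by
      have h1 : ∑ x ∈ L, Q x = Q (e+9) + ∑ x ∈ L.erase (e+9), Q x :=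
        (Finset.add_sum_erase _ _ (hc ▸ hjmem)).symm
      omega
    have hmem' : ∀ x ∈ L.erase (e+9), x = e + 7 ∨ x ≤ e + 4 := by
      intro x hx
      have hxL := Finset.mem_of_mem_erase hx
      have hxne := Finset.ne_of_mem_erase hx
      have hbx := hb x hxL
      have hxj := hjmax x hxL
      have := hleg.1 x hxL (e+9) (hc ▸ hjmem) hxne
      omega
    rcases em (e + 7 ∈ L.erase (e+9)) with h7 | h7
    · have eq2 : Q (e+8) = Q (e+7) + Q (e+3) := Q_rec1 (e+1)
      have hsum'' : ∑ x ∈ (L.erase (e+9)).erase (e+7), Q x = Q (e+3) := by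
        have h1 : ∑ x ∈ L.erase (e+9), Q x
            = Q (e+7) + ∑ x ∈ (L.erase (e+9)).erase (e+7), Q x :=
          (Finset.add_sum_erase _ _ h7).symm
        omega
      have hmem'' : ∀ x ∈ (L.erase (e+9)).erase (e+7), 1 ≤ x ∧ x < e + 3 := by
        intro x hx
        have hx7 := Finset.ne_of_mem_erase hx
        have hx' := Finset.mem_of_mem_erase hx
        have hxL := Finset.mem_of_mem_erase hx'
        have hbx := hb x hxL
        have h1 := hmem' x hx'
        have := hleg.1 x hxL (e+7) (Finset.mem_of_mem_erase h7) hx7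
        omega
      exact IH (e+3) (by omega) (by omega) _ hmem''
        (FQLegal_subset (Finset.Subset.trans (Finset.erase_subset _ _) (Finset.erase_subset _ _)) hleg)
        hsum''
    · have hmem2 : ∀ x ∈ L.erase (e+9), 1 ≤ x ∧ x < e + 8 := by
        intro x hx
        have hxL := Finset.mem_of_mem_erase hx
        have hbx := hb x hxL
        rcases hmem' x hx with h | h
        · exact absurd (h ▸ hx) h7
        · exact ⟨hbx.1, by omega⟩
      exact IH (e+8) (by omega) (by omega) _ hmem2
        (FQLegal_subset (Finset.erase_subset _ _) hleg) hsum'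
  · -- j = i - 1
    have eq1 : Q (e+11) = Q (e+10) + Q (e+6) := Q_rec1 (e+4)
    have hsum' : ∑ x ∈ L.erase (e+10), Q x = Q (e+6) := by
      have h1 : ∑ x ∈ L, Q x = Q (e+10) + ∑ x ∈ L.erase (e+10), Q x :=
        (Finset.add_sum_erase _ _ (hc ▸ hjmem)).symm
      omega
    have hmem' : ∀ x ∈ L.erase (e+10), x = e + 8 ∨ x ≤ e + 5 := by
      intro x hx
      have hxL := Finset.mem_of_mem_erase hx
      have hxne := Finset.ne_of_mem_erase hx
      have hbx := hb x hxL
      have hxj := hjmax x hxL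
      have := hleg.1 x hxL (e+10) (hc ▸ hjmem) hxne
      omega
    rcases em (e + 8 ∈ L.erase (e+10)) with h8 | h8
    · -- sum would be ≥ Q (e+8) > Q (e+6)
      have hgt : Q (e+8) ≤ ∑ x ∈ L.erase (e+10), Q x :=
        Finset.single_le_sum (fun x _ => Nat.zero_le (Q x)) h8
      have : Q (e+6) < Q (e+8) := Q_strict_mono (by omega) (by omega)
      omega
    · have hmem2 : ∀ x ∈ L.erase (e+10), 1 ≤ x ∧ x < e + 6 := by
        intro x hx
        have hxL := Finset.mem_of_mem_erase hx
        have hbx := hb x hxL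
        rcases hmem' x hx with h | h
        · exact absurd (h ▸ hx) h8
        · exact ⟨hbx.1, by omega⟩
      exact IH (e+6) (by omega) (by omega) _ hmem2
        (FQLegal_subset (Finset.erase_subset _ _) hleg) hsum'

/-- The abstract Fibonacci Quilt sequence agrees with `Q`. -/
lemma q_eq_Q (q : ℕ → ℕ) (hq : IsFQSeq q) : ∀ i, 1 ≤ i → q i = Q i := by
  intro i
  induction i using Nat.strong_induction_on with
  | _ i IH =>
  intro hi1
  rcases em (i = 1) with rfl | hne
  · exact hq.1
  have hi2 : 2 ≤ i := by omega
  have hiff : ∀ m, FQRepr q i m ↔ FQRepr Q i m := by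
    intro m
    unfold FQRepr
    constructor <;> rintro ⟨L, hb, hleg, hsum⟩ <;> refine ⟨L, hb, hleg, ?_⟩ <;>
      rw [← hsum] <;> refine Finset.sum_congr rfl fun j hj => ?_
    · exact (IH j (hb j hj).2 (hb j hj).1).symm
    · exact IH j (hb j hj).2 (hb j hj).1
  have hleast := hq.2 i hi2
  have htarget : IsLeast {m : ℕ | 0 < m ∧ ¬ FQRepr q i m} (Q i) := by
    constructor
    · refine ⟨Q_pos (by omega), ?_⟩
      rw [hiff]
      rintro ⟨L, hb, hleg, hsum⟩
      exact no_repr i hi2 L hb hleg hsum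
    · rintro m ⟨hm, hnr⟩
      by_contra hlt
      push_neg at hlt
      obtain ⟨L, hb, hleg, hsum⟩ := repr_all i hi2 m hm hlt
      exact hnr ((hiff m).2 ⟨L, hb, hleg, hsum⟩)
  exact hleast.unique htarget

/-- Any decomposition into quilt numbers has at least `gl m` summands. -/
lemma main_bound : ∀ (s n : ℕ) (c : ℕ → ℕ) (m : ℕ), c 0 = 0 → (∑ i ∈ Finset.range (n+1), c i * Q i) = m →
    (∑ i ∈ Finset.range (n+1), c i) = s → gl m ≤ s := by
  intro s
  induction s with
  | zero =>
    intro n c m hc0 hsum hcount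
    have hall : ∀ i ∈ Finset.range (n+1), c i = 0 :=
      (Finset.sum_eq_zero_iff).1 hcount
    have hm : m = 0 := by
      rw [← hsum]
      exact Finset.sum_eq_zero fun i hi => by rw [hall i hi, Nat.zero_mul]
    rw [hm, gl_zero]
  | succ s IH =>
    intro n c m hc0 hsum hcount
    have hex : ∃ j ∈ Finset.range (n+1), c j ≠ 0 := by
      by_contra h
      push_neg at h
      rw [Finset.sum_eq_zero h] at hcount
      omega
    obtain ⟨j, hjmem, hcj⟩ := hex
    have hj1 : 1 ≤ j := by
      rcases Nat.eq_zero_or_pos j with rfl | h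
      · exact absurd hc0 hcj
      · exact h
    set c' : ℕ → ℕ := Function.update c j (c j - 1) with hc'
    have hc'j : c' j = c j - 1 := Function.update_self j _ c
    have hc'ne : ∀ x, x ≠ j → c' x = c x := fun x hx => Function.update_of_ne hx _ c
    have hc'0 : c' 0 = 0 := by rw [hc'ne 0 (by omega)]; exact hc0
    have hrw1 : ∑ i ∈ Finset.range (n+1), c i * Q i
        = c j * Q j + ∑ i ∈ (Finset.range (n+1)).erase j, c i * Q i :=
      (Finset.add_sum_erase _ _ hjmem).symm
    have hrw2 : ∑ i ∈ Finset.range (n+1), c' i * Q i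
        = c' j * Q j + ∑ i ∈ (Finset.range (n+1)).erase j, c' i * Q i :=
      (Finset.add_sum_erase _ _ hjmem).symm
    have hsame : ∑ i ∈ (Finset.range (n+1)).erase j, c' i * Q i
        = ∑ i ∈ (Finset.range (n+1)).erase j, c i * Q i :=
      Finset.sum_congr rfl fun x hx => by rw [hc'ne x (Finset.ne_of_mem_erase hx)]
    have hrw3 : ∑ i ∈ Finset.range (n+1), c i
        = c j + ∑ i ∈ (Finset.range (n+1)).erase j, c i :=
      (Finset.add_sum_erase _ _ hjmem).symm
    have hrw4 : ∑ i ∈ Finset.range (n+1), c' i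
        = c' j + ∑ i ∈ (Finset.range (n+1)).erase j, c' i :=
      (Finset.add_sum_erase _ _ hjmem).symm
    have hsame2 : ∑ i ∈ (Finset.range (n+1)).erase j, c' i
        = ∑ i ∈ (Finset.range (n+1)).erase j, c i :=
      Finset.sum_congr rfl fun x hx => by rw [hc'ne x (Finset.ne_of_mem_erase hx)]
    have hmul : c j * Q j = (c j - 1) * Q j + Q j := by
      obtain ⟨u, hu⟩ : ∃ u, c j = u + 1 := ⟨c j - 1, by omega⟩
      rw [hu, show u + 1 - 1 = u from rfl, Nat.add_mul, Nat.one_mul]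
    have hQjm : Q j ≤ m := by
      rw [← hsum, hrw1]
      omega
    have hsum' : ∑ i ∈ Finset.range (n+1), c' i * Q i = m - Q j := by
      rw [hrw2, hsame, hc'j]
      omega
    have hcount' : ∑ i ∈ Finset.range (n+1), c' i = s := by
      rw [hrw4, hsame2, hc'j]
      omega
    have hIH : gl (m - Q j) ≤ s := IH n c' (m - Q j) hc'0 hsum' hcount'
    have hKL : gl ((m - Q j) + Q j) ≤ gl (m - Q j) + 1 :=
      KL ((m - Q j) + Q j) (m - Q j) j hj1 le_rfl
    rw [show m = (m - Q j) + Q j by omega]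
    omega

/-- The Greedy-6 output has length `≤ gl m`. -/
lemma greedy_le (q : ℕ → ℕ) (hqQ : ∀ i, 1 ≤ i → q i = Q i) :
    ∀ L m, IsGreedy6 q L m → L.length ≤ gl m := by
  intro L
  induction L with
  | nil => intro m _; simp
  | cons ℓ rest IH =>
    intro m hL
    have hL' : (rest = [] ∧ 1 ≤ ℓ ∧ m = q ℓ) ∨
        (m = 6 ∧ ℓ = 4 ∧ rest = [2]) ∨
        ((∀ n, 1 ≤ n → q n ≠ m) ∧ q 6 ≤ m ∧ 1 ≤ ℓ ∧ q ℓ < m ∧ m < q (ℓ + 1) ∧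
          IsGreedy6 q rest (m - q ℓ)) := hL
    rcases hL' with ⟨hrest, hℓ1, hm⟩ | ⟨hm, hℓ, hrest⟩ | ⟨hnq, hge, hℓ1, hlt1, hlt2, hrec⟩
    · subst hrest
      rw [hm, hqQ ℓ hℓ1, gl_quilt (isQb_Q hℓ1)]
      simp
    · subst hrest
      rw [hm, gl_six]
      simp
    · have hq6 : q 6 = Q 6 := hqQ 6 (by omega)
      have hQ6 : Q 6 = 7 := rfl
      have hm6 : m ≠ 6 := by omega
      rw [hqQ ℓ hℓ1] at hlt1 hrec
      rw [hqQ (ℓ+1) (by omega)] at hlt2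
      have hstep : gl m = gl (m - Q ℓ) + 1 := gl_step' hℓ1 hlt1 hlt2 hm6
      have hIH : rest.length ≤ gl (m - Q ℓ) := IH (m - Q ℓ) hrec
      rw [hstep]
      simp only [List.length_cons]
      omega

theorem stmt_8 (q : ℕ → ℕ) (hq : IsFQSeq q) (m : ℕ) (hm : 0 < m)
    (n : ℕ) (c : ℕ → ℕ) (hc0 : c 0 = 0)
    (hsum : ∑ i ∈ Finset.range (n + 1), c i * q i = m)
    (L : List ℕ) (hL : IsGreedy6 q L m) :
    L.length ≤ ∑ i ∈ Finset.range (n + 1), c i := by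
  have hqQ := q_eq_Q q hq
  have hsum' : ∑ i ∈ Finset.range (n + 1), c i * Q i = m := by
    rw [← hsum]
    refine Finset.sum_congr rfl fun j _ => ?_
    rcases Nat.eq_zero_or_pos j with rfl | hj
    · rw [hc0]; simp
    · rw [hqQ j hj]
  have h1 : L.length ≤ gl m := greedy_le q hqQ L m hL
  have h2 : gl m ≤ ∑ i ∈ Finset.range (n + 1), c i :=
    main_bound (∑ i ∈ Finset.range (n + 1), c i) n c m hc0 hsum' rfl
  omega
end

section
/- Fix integers s, b ≥ 1 and let {a_n} be the (s,b)-Generacci sequence. For n, k ≥ 0 let q_{n,k} denote the number of integers m ∈ [0, a_{nb+1}) whose (s,b)-Generacci legal decomposition contains exactly k summands. Then q_{n,0} = 1 and q_{n,1} = nb for all n; q_{n,k} = 0 whenever n < s+1 and k ≥ 2; for n ≥ s+1 and 1 ≤ k ≤ (n+s)/(s+1), q_{n,k} = b·q_{n−(s+1),k−1} + q_{n−1,k}; and q_{n,k} = 0 whenever k > (n+s)/(s+1). -/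
open scoped BigOperators

/-- Bin index (1-indexed) of position `ℓ` when bins have size `b`: `⌈ℓ/b⌉`. -/
def binIdx (b ℓ : ℕ) : ℕ := (ℓ + b - 1) / b

/-- A finite set of indices is `(s,b)`-legal if the bin indices of any two distinct
elements differ by more than `s`. -/
def SBLegal (s b : ℕ) (L : Finset ℕ) : Prop :=
  ∀ i ∈ L, ∀ j ∈ L, i ≠ j →
    s < max (binIdx b i) (binIdx b j) - min (binIdx b i) (binIdx b j)

/-- `m` has an `(s,b)`-Generacci legal decomposition using only `a_1, …, a_{i-1}`. -/
def SBRepr (s b : ℕ) (a : ℕ → ℕ) (i m : ℕ) : Prop :=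
  ∃ L : Finset ℕ, (∀ j ∈ L, 1 ≤ j ∧ j < i) ∧ SBLegal s b L ∧ (∑ j ∈ L, a j) = m

/-- `a` (1-indexed) is the `(s,b)`-Generacci sequence: an increasing sequence of positive
integers in which each `a i` is the smallest positive integer having no `(s,b)`-Generacci
legal decomposition using elements of `{a_1, …, a_{i-1}}`. -/
def IsGeneracci (s b : ℕ) (a : ℕ → ℕ) : Prop :=
  (∀ i, 1 ≤ i → a i < a (i + 1)) ∧
  ∀ i, 1 ≤ i → IsLeast {m : ℕ | 0 < m ∧ ¬ SBRepr s b a i m} (a i)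


section Aux
variable {s b : ℕ} {a : ℕ → ℕ}

lemma binIdx_le_iff (hb : 1 ≤ b) {ℓ t : ℕ} : binIdx b ℓ ≤ t ↔ ℓ ≤ t * b := by
  unfold binIdx
  rw [Nat.div_le_iff_le_mul_add_pred (by omega), Nat.mul_comm]
  omega

lemma binIdx_mono (hb : 1 ≤ b) {i j : ℕ} (h : i ≤ j) : binIdx b i ≤ binIdx b j :=
  Nat.div_le_div_right (by omega)

lemma binIdx_pos (hb : 1 ≤ b) {ℓ : ℕ} (h : 1 ≤ ℓ) : 1 ≤ binIdx b ℓ := by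
  by_contra h'
  have := (binIdx_le_iff hb (ℓ := ℓ) (t := 0)).1 (by omega)
  omega

lemma binIdx_bin (hb : 1 ≤ b) {n r : ℕ} (h1 : 1 ≤ r) (h2 : r ≤ b) :
    binIdx b (n * b + r) = n + 1 := by
  have h3 : binIdx b (n * b + r) ≤ n + 1 := (binIdx_le_iff hb).2 (by nlinarith)
  have h4 : ¬ binIdx b (n * b + r) ≤ n := by
    rw [binIdx_le_iff hb]; omega
  omega

lemma SBLegal_subset {L L' : Finset ℕ} (h : L' ⊆ L) (hL : SBLegal s b L) : SBLegal s b L' :=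
  fun i hi j hj hij => hL i (h hi) j (h hj) hij

lemma SBLegal_empty : SBLegal s b (∅ : Finset ℕ) := by intro i hi; simp at hi

lemma SBLegal_singleton (j : ℕ) : SBLegal s b ({j} : Finset ℕ) := by
  intro i hi j' hj' hij
  simp at hi hj'; omega

lemma SBRepr_mono {i i' m : ℕ} (h : i ≤ i') (hr : SBRepr s b a i m) : SBRepr s b a i' m := by
  obtain ⟨L, h1, h2, h3⟩ := hr
  exact ⟨L, fun j hj => ⟨(h1 j hj).1, lt_of_lt_of_le (h1 j hj).2 h⟩, h2, h3⟩

variable (ha : IsGeneracci s b a)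
include ha

lemma a_one : a 1 = 1 := by
  have h := ha.2 1 le_rfl
  have : IsLeast {m : ℕ | 0 < m ∧ ¬ SBRepr s b a 1 m} 1 := by
    constructor
    · refine ⟨one_pos, ?_⟩
      rintro ⟨L, h1, h2, h3⟩
      have : L = ∅ := by
        rw [Finset.eq_empty_iff_forall_notMem]
        intro j hj; have := h1 j hj; omega
      subst this; simp at h3
    · intro m hm; exact hm.1
  exact h.unique this

lemma a_strictMonoOn {i j : ℕ} (h1 : 1 ≤ i) (h2 : i < j) : a i < a j := by
  induction j with
  | zero => omega
  | succ n IH =>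
    rcases Nat.lt_or_ge i n with h | h
    · exact lt_trans (IH h) (ha.1 n (by omega))
    · have : i = n := by omega
      subst this; exact ha.1 i h1

lemma a_monoOn {i j : ℕ} (h1 : 1 ≤ i) (h2 : i ≤ j) : a i ≤ a j := by
  rcases Nat.eq_or_lt_of_le h2 with h | h
  · subst h; rfl
  · exact le_of_lt (a_strictMonoOn ha h1 h)

lemma a_pos {i : ℕ} (h : 1 ≤ i) : 1 ≤ a i := by
  have := a_one ha
  have := a_monoOn ha (le_refl 1) h
  omega

lemma a_lt_a_iff {i j : ℕ} (h1 : 1 ≤ i) (h2 : 1 ≤ j) : a i < a j ↔ i < j := by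
  constructor
  · intro h
    by_contra h'
    have : a j ≤ a i := a_monoOn ha h2 (by omega)
    omega
  · exact a_strictMonoOn ha h1

end Aux


/-- step increment -/
def gstep (s b : ℕ) (a : ℕ → ℕ) (ℓ : ℕ) : ℕ := a ((binIdx b ℓ - (s + 1)) * b + 1)

section Main
variable {s b : ℕ} {a : ℕ → ℕ}

lemma main_S (hs : 1 ≤ s) (hb : 1 ≤ b) (ha : IsGeneracci s b a) :
    ∀ ℓ, 1 ≤ ℓ →
      (a (ℓ + 1) = a ℓ + gstep s b a ℓ) ∧
      (∀ m, m < a (ℓ + 1) → SBRepr s b a (ℓ + 1) m) ∧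
      (∀ L : Finset ℕ, (∀ j ∈ L, 1 ≤ j ∧ j ≤ ℓ) → SBLegal s b L →
        (∑ j ∈ L, a j) < a (ℓ + 1)) := by
  intro ℓ
  induction ℓ using Nat.strong_induction_on with
  | _ ℓ IH =>
    intro hℓ
    have hgpos : 1 ≤ gstep s b a ℓ := a_pos ha (by omega)
    -- Part A : the sum bound (stated against a ℓ + gstep)
    have hbound : ∀ L : Finset ℕ, (∀ j ∈ L, 1 ≤ j ∧ j ≤ ℓ) → SBLegal s b L →
        (∑ j ∈ L, a j) < a ℓ + gstep s b a ℓ := by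
      intro L hL hleg
      rcases Finset.eq_empty_or_nonempty L with rfl | hne
      · simp; have := a_pos ha hℓ; omega
      · set j := L.max' hne with hj
        have hjL : j ∈ L := L.max'_mem hne
        have hjle : 1 ≤ j ∧ j ≤ ℓ := hL j hjL
        set t := binIdx b j - (s + 1) with ht
        have hbj1 : 1 ≤ binIdx b j := binIdx_pos hb hjle.1
        -- every other element is ≤ t * b
        have hother : ∀ i ∈ L.erase j, i ≤ t * b ∧ 1 ≤ i := by
          intro i hi
          have hiL : i ∈ L := Finset.mem_of_mem_erase hi
          have hij : i ≠ j := Finset.ne_of_mem_erase hi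
          have hile : i ≤ j := L.le_max' i hiL
          have hbi : binIdx b i ≤ binIdx b j := binIdx_mono hb hile
          have hleg' := hleg i hiL j hjL hij
          rw [max_eq_right hbi, min_eq_left hbi] at hleg'
          have h1 : binIdx b i ≤ t := by omega
          exact ⟨(binIdx_le_iff hb).1 h1, (hL i hiL).1⟩
        have hsum : (∑ x ∈ L, a x) = a j + ∑ x ∈ L.erase j, a x :=
          (Finset.add_sum_erase L a hjL).symm
        rcases Nat.eq_zero_or_pos t with ht0 | ht1
        · -- erase is empty
          have hE : L.erase j = ∅ := by
            rw [Finset.eq_empty_iff_forall_notMem]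
            intro i hi
            have := hother i hi
            rw [ht0] at this
            omega
          rw [hE] at hsum
          simp at hsum
          have : a j ≤ a ℓ := a_monoOn ha hjle.1 hjle.2
          omega
        · -- use IH at t * b
          have htbj : t * b < j := by
            by_contra h
            have : binIdx b j ≤ t := (binIdx_le_iff hb).2 (by omega)
            omega
          have htb1 : 1 ≤ t * b := by nlinarith
          obtain ⟨iS1, _, iS3⟩ := IH (t * b) (by omega) htb1
          have herase : (∑ x ∈ L.erase j, a x) < a (t * b + 1) := by
            refine iS3 (L.erase j) (fun i hi => ⟨(hother i hi).2, (hother i hi).1⟩) ?_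
            exact SBLegal_subset (Finset.erase_subset _ _) hleg
          have hgj : gstep s b a j = a (t * b + 1) := rfl
          rcases Nat.eq_or_lt_of_le hjle.2 with heq | hlt
          · subst heq; omega
          · obtain ⟨jS1, _, _⟩ := IH j hlt hjle.1
            have h2 : a (j + 1) ≤ a ℓ := a_monoOn ha (by omega) (by omega)
            omega
    -- Part B : completeness below a ℓ + gstep
    have hcomp : ∀ m, m < a ℓ + gstep s b a ℓ → SBRepr s b a (ℓ + 1) m := by
      intro m hm
      rcases Nat.lt_or_ge m (a ℓ) with hlo | hhi
      · rcases Nat.eq_or_lt_of_le hℓ with h1 | h1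
        · -- ℓ = 1 : m < a 1 = 1
          have h2 : a 1 = 1 := a_one ha
          have h3 : m = 0 := by rw [← h1] at hlo; omega
          exact ⟨∅, by simp, SBLegal_empty, by simp [h3]⟩
        · obtain ⟨_, pS2, _⟩ := IH (ℓ - 1) (by omega) (by omega)
          have : ℓ - 1 + 1 = ℓ := by omega
          rw [this] at pS2
          exact SBRepr_mono (by omega) (pS2 m hlo)
      · set t := binIdx b ℓ - (s + 1) with ht
        set m' := m - a ℓ with hm'
        have hm'lt : m' < a (t * b + 1) := by
          have : gstep s b a ℓ = a (t * b + 1) := rfl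
          omega
        have htbℓ : t * b < ℓ := by
          rcases Nat.eq_zero_or_pos t with h | h
          · rw [h]; omega
          · by_contra hcon
            have : binIdx b ℓ ≤ t := (binIdx_le_iff hb).2 (by omega)
            have : 1 ≤ binIdx b ℓ := binIdx_pos hb hℓ
            omega
        have hrep' : SBRepr s b a (t * b + 1) m' := by
          rcases Nat.eq_zero_or_pos t with h | h
          · have h2 : a (t * b + 1) = 1 := by rw [h]; simp [a_one ha]
            have : m' = 0 := by omega
            exact ⟨∅, by simp, SBLegal_empty, by simp [this]⟩
          · obtain ⟨_, pS2, _⟩ := IH (t * b) (by omega) (by nlinarith)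
            exact pS2 m' hm'lt
        obtain ⟨L', hL'1, hL'2, hL'3⟩ := hrep'
        have hnot : ℓ ∉ L' := fun h => by have := hL'1 ℓ h; omega
        have hbinL' : ∀ x ∈ L', binIdx b x ≤ t ∧ 1 ≤ binIdx b x := by
          intro x hx
          have h1 := hL'1 x hx
          exact ⟨(binIdx_le_iff hb).2 (by omega), binIdx_pos hb h1.1⟩
        have hkey : ∀ x ∈ L', s < max (binIdx b ℓ) (binIdx b x) - min (binIdx b ℓ) (binIdx b x) := by
          intro x hx
          obtain ⟨h1, h2⟩ := hbinL' x hx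
          have hbℓ : binIdx b ℓ = t + s + 1 := by
            have h3 : 1 ≤ binIdx b ℓ := binIdx_pos hb hℓ
            have h4 : 1 ≤ t := by omega
            omega
          have h5 : binIdx b x ≤ binIdx b ℓ := by omega
          rw [max_eq_left h5, min_eq_right h5]
          omega
        refine ⟨insert ℓ L', ?_, ?_, ?_⟩
        · intro x hx
          rcases Finset.mem_insert.1 hx with rfl | hx'
          · omega
          · have := hL'1 x hx'; omega
        · intro i hi j hj hij
          rcases Finset.mem_insert.1 hi with rfl | hi' <;>
            rcases Finset.mem_insert.1 hj with rfl | hj'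
          · omega
          · exact hkey j hj'
          · rw [max_comm, min_comm]; exact hkey i hi'
          · exact hL'2 i hi' j hj' hij
        · rw [Finset.sum_insert hnot, hL'3]
          omega
    -- Part C : IsLeast
    have hleast : IsLeast {m : ℕ | 0 < m ∧ ¬ SBRepr s b a (ℓ + 1) m}
        (a ℓ + gstep s b a ℓ) := by
      constructor
      · refine ⟨by have := a_pos ha hℓ; omega, ?_⟩
        rintro ⟨L, h1, h2, h3⟩
        have := hbound L (fun j hj => ⟨(h1 j hj).1, by have := (h1 j hj).2; omega⟩) h2
        omega
      · intro m hm
        by_contra hcon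
        exact hm.2 (hcomp m (by omega))
    have hS1 : a (ℓ + 1) = a ℓ + gstep s b a ℓ :=
      (ha.2 (ℓ + 1) (by omega)).unique hleast
    refine ⟨hS1, ?_, ?_⟩
    · intro m hm; exact hcomp m (by omega)
    · intro L h1 h2
      rw [hS1]
      exact hbound L h1 h2

end Main

section Derived
variable {s b : ℕ} {a : ℕ → ℕ}

lemma bin_formula (hs : 1 ≤ s) (hb : 1 ≤ b) (ha : IsGeneracci s b a) (n : ℕ) :
    ∀ r, r ≤ b → a (n * b + r + 1) = a (n * b + 1) + r * a ((n - s) * b + 1) := by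
  intro r
  induction r with
  | zero => simp
  | succ r IHr =>
    intro hr
    have h1 := IHr (by omega)
    have h2 := (main_S hs hb ha (n * b + r + 1) (by omega)).1
    have h3 : binIdx b (n * b + (r + 1)) = n + 1 := binIdx_bin hb (by omega) hr
    have h4 : gstep s b a (n * b + r + 1) = a ((n - s) * b + 1) := by
      unfold gstep
      have : n * b + r + 1 = n * b + (r + 1) := by ring
      rw [this, h3]
      congr 3
      omega
    have h5 : n * b + (r + 1) + 1 = (n * b + r + 1) + 1 := by ring
    rw [h5, h2, h4, h1]
    ring

lemma c_rec (hs : 1 ≤ s) (hb : 1 ≤ b) (ha : IsGeneracci s b a) (n : ℕ) :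
    a ((n + 1) * b + 1) = a (n * b + 1) + b * a ((n - s) * b + 1) := by
  have h := bin_formula hs hb ha n b le_rfl
  have h2 : (n + 1) * b + 1 = n * b + b + 1 := by ring
  rw [h2, h, Nat.mul_comm]

/-- a legal set with kk elements has an element of large bin index -/
lemma maxbin (hs : 1 ≤ s) (hb : 1 ≤ b) :
    ∀ kk (L : Finset ℕ), L.card = kk + 1 → (∀ j ∈ L, 1 ≤ j) → SBLegal s b L →
      ∃ j ∈ L, kk * (s + 1) + 1 ≤ binIdx b j := by
  intro kk
  induction kk with
  | zero =>
    intro L hc h1 _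
    have hne : L.Nonempty := Finset.card_pos.1 (by omega)
    obtain ⟨j, hj⟩ := hne
    exact ⟨j, hj, by simpa using binIdx_pos hb (h1 j hj)⟩
  | succ kk IHk =>
    intro L hc h1 hleg
    have hne : L.Nonempty := Finset.card_pos.1 (by omega)
    set j := L.max' hne with hj
    have hjL : j ∈ L := L.max'_mem hne
    have hcard : (L.erase j).card = kk + 1 := by
      rw [Finset.card_erase_of_mem hjL]; omega
    obtain ⟨i, hiE, hi⟩ := IHk (L.erase j) hcard
      (fun x hx => h1 x (Finset.mem_of_mem_erase hx))
      (SBLegal_subset (Finset.erase_subset _ _) hleg)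
    have hiL : i ∈ L := Finset.mem_of_mem_erase hiE
    have hij : i ≠ j := Finset.ne_of_mem_erase hiE
    have hile : i ≤ j := L.le_max' i hiL
    have hbi : binIdx b i ≤ binIdx b j := binIdx_mono hb hile
    have hleg' := hleg i hiL j hjL hij
    rw [max_eq_right hbi, min_eq_left hbi] at hleg'
    have hmul : (kk + 1) * (s + 1) = kk * (s + 1) + (s + 1) := by ring
    exact ⟨j, hjL, by omega⟩

end Derived


/-- `q_{n,k}` : the number of integers `m ∈ [0, a_{nb+1})` whose `(s,b)`-Generacci legal
decomposition contains exactly `k` summands (here `k : ℕ → ℕ` is the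
number-of-summands function). -/
def sbQCount (a : ℕ → ℕ) (b : ℕ) (k : ℕ → ℕ) (n kk : ℕ) : ℕ :=
  ((Finset.range (a (n * b + 1))).filter (fun m => k m = kk)).card

theorem stmt_17 (s b : ℕ) (hs : 1 ≤ s) (hb : 1 ≤ b) (a : ℕ → ℕ)
    (ha : IsGeneracci s b a) (k : ℕ → ℕ)
    (hk : ∀ m : ℕ, ∀ L : Finset ℕ, (∀ j ∈ L, 1 ≤ j) → SBLegal s b L →
      (∑ j ∈ L, a j) = m → L.card = k m)
    (hex : ∀ m : ℕ, ∃ L : Finset ℕ,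
      (∀ j ∈ L, 1 ≤ j) ∧ SBLegal s b L ∧ (∑ j ∈ L, a j) = m) :
    (∀ n : ℕ, sbQCount a b k n 0 = 1) ∧
    (∀ n : ℕ, sbQCount a b k n 1 = n * b) ∧
    (∀ n kk : ℕ, n < s + 1 → 2 ≤ kk → sbQCount a b k n kk = 0) ∧
    (∀ n kk : ℕ, s + 1 ≤ n → 1 ≤ kk → kk * (s + 1) ≤ n + s →
      sbQCount a b k n kk =
        b * sbQCount a b k (n - (s + 1)) (kk - 1) + sbQCount a b k (n - 1) kk) ∧
    (∀ n kk : ℕ, n + s < kk * (s + 1) → sbQCount a b k n kk = 0) := by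
  have hpos : ∀ n : ℕ, 0 < a (n * b + 1) := fun n => a_pos ha (by omega)
  have k0 : k 0 = 0 := (hk 0 ∅ (by simp) SBLegal_empty (by simp)).symm
  have ksingle : ∀ j, 1 ≤ j → k (a j) = 1 := by
    intro j hj
    have := hk (a j) {j} (by simp [hj]) (SBLegal_singleton j) (by simp)
    simpa using this.symm
  -- Part 1
  have part1 : ∀ n : ℕ, sbQCount a b k n 0 = 1 := by
    intro n
    unfold sbQCount
    have heq : (Finset.range (a (n * b + 1))).filter (fun m => k m = 0) = {0} := by
      ext m
      simp only [Finset.mem_filter, Finset.mem_range, Finset.mem_singleton]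
      constructor
      · rintro ⟨_, hm⟩
        obtain ⟨L, h1, h2, h3⟩ := hex m
        have hc := hk m L h1 h2 h3
        have hE : L = ∅ := Finset.card_eq_zero.1 (by omega)
        subst hE
        simpa using h3.symm
      · rintro rfl
        exact ⟨hpos n, k0⟩
    rw [heq, Finset.card_singleton]
  -- Part 2
  have part2 : ∀ n : ℕ, sbQCount a b k n 1 = n * b := by
    intro n
    unfold sbQCount
    have himg : (Finset.range (a (n * b + 1))).filter (fun m => k m = 1)
        = (Finset.Icc 1 (n * b)).image a := by
      ext m
      simp only [Finset.mem_filter, Finset.mem_range, Finset.mem_image, Finset.mem_Icc]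
      constructor
      · rintro ⟨hm, hm1⟩
        obtain ⟨L, h1, h2, h3⟩ := hex m
        have hc := hk m L h1 h2 h3
        have hc1 : L.card = 1 := by omega
        obtain ⟨j, rfl⟩ := Finset.card_eq_one.1 hc1
        simp only [Finset.sum_singleton] at h3
        have hj1 : 1 ≤ j := h1 j (by simp)
        refine ⟨j, ⟨hj1, ?_⟩, h3⟩
        have h9 : a j < a (n * b + 1) := by omega
        have := (a_lt_a_iff (i := j) (j := n * b + 1) ha hj1 (by omega)).1 h9
        omega
      · rintro ⟨j, ⟨hj1, hj2⟩, rfl⟩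
        exact ⟨a_strictMonoOn ha hj1 (by omega), ksingle j hj1⟩
    have hinj : Set.InjOn a ↑(Finset.Icc 1 (n * b)) := by
      intro x hx y hy hxy
      simp only [Finset.coe_Icc, Set.mem_Icc] at hx hy
      by_contra hne
      rcases Nat.lt_or_ge x y with h | h
      · have := a_strictMonoOn ha hx.1 h; omega
      · have h' : y < x := by omega
        have := a_strictMonoOn ha hy.1 h'; omega
    rw [himg, Finset.card_image_of_injOn hinj, Nat.card_Icc]
    omega
  -- Part 5
  have part5 : ∀ n kk : ℕ, n + s < kk * (s + 1) → sbQCount a b k n kk = 0 := by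
    intro n kk h
    have hkk1 : 1 ≤ kk := by
      rcases Nat.eq_zero_or_pos kk with rfl | h1
      · simp at h
      · exact h1
    unfold sbQCount
    rw [Finset.card_eq_zero, Finset.filter_eq_empty_iff]
    intro m hm
    rw [Finset.mem_range] at hm
    intro hkm
    obtain ⟨L, h1, h2, h3⟩ := hex m
    have hc := hk m L h1 h2 h3
    have hcard : L.card = (kk - 1) + 1 := by omega
    obtain ⟨j, hjL, hbig⟩ := maxbin hs hb (kk - 1) L hcard h1 h2
    have hjt : (kk - 1) * (s + 1) * b + 1 ≤ j := by
      by_contra h'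
      have : binIdx b j ≤ (kk - 1) * (s + 1) := (binIdx_le_iff hb).2 (by omega)
      omega
    have htn : n ≤ (kk - 1) * (s + 1) := by
      have h4 : (kk - 1 + 1) * (s + 1) = (kk - 1) * (s + 1) + (s + 1) := by ring
      have h5 : kk - 1 + 1 = kk := by omega
      rw [h5] at h4
      omega
    have h5 : a (n * b + 1) ≤ a j := by
      refine a_monoOn ha (by omega) ?_
      have := Nat.mul_le_mul_right b htn
      omega
    have h6 : a j ≤ m := by
      rw [← h3]
      exact Finset.single_le_sum (fun i _ => Nat.zero_le _) hjL
    omega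
  -- Part 3
  have part3 : ∀ n kk : ℕ, n < s + 1 → 2 ≤ kk → sbQCount a b k n kk = 0 := by
    intro n kk hn hkk
    apply part5
    have := Nat.mul_le_mul_right (s + 1) hkk
    omega
  refine ⟨part1, part2, part3, ?_, part5⟩
  -- Part 4
  intro n kk hn hkk _hle
  simp only [sbQCount]
  set n2 := n - (s + 1) with hn2
  set n1 := n - 1 with hn1
  have hne : n = n1 + 1 := by omega
  have hns : n1 - s = n2 := by omega
  set d := a (n2 * b + 1) with hd
  set C1 := a (n1 * b + 1) with hC1
  have hd1 : 1 ≤ d := a_pos ha (by omega)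
  have hrec : a (n * b + 1) = C1 + b * d := by
    rw [hne, c_rec hs hb ha n1, hns, ← hd, ← hC1]
  -- key step
  have kstep : ∀ r, r < b → ∀ m', m' < d → k (C1 + r * d + m') = k m' + 1 := by
    intro r hr m' hm'
    have hap : a (n1 * b + r + 1) = C1 + r * d := by
      have h := bin_formula hs hb ha n1 r (by omega)
      rw [hns, ← hd, ← hC1] at h
      exact h
    obtain ⟨L', h1, h2, h3⟩ := hex m'
    have hkm' := hk m' L' h1 h2 h3
    have hjlt : ∀ j ∈ L', j ≤ n2 * b := by
      intro j hj
      have haj : a j ≤ m' := by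
        rw [← h3]; exact Finset.single_le_sum (fun i _ => Nat.zero_le _) hj
      by_contra h'
      have : a (n2 * b + 1) ≤ a j := a_monoOn ha (by omega) (by omega)
      omega
    have hpL : (n1 * b + r + 1) ∉ L' := by
      intro h
      have := hjlt _ h
      have : n2 * b ≤ n1 * b := Nat.mul_le_mul_right b (by omega)
      omega
    have hbp : binIdx b (n1 * b + r + 1) = n := by
      have : n1 * b + r + 1 = n1 * b + (r + 1) := by ring
      rw [this, binIdx_bin hb (by omega) (by omega), ← hne]
    have hkey : ∀ x ∈ L', s < max (binIdx b (n1 * b + r + 1)) (binIdx b x)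
        - min (binIdx b (n1 * b + r + 1)) (binIdx b x) := by
      intro x hx
      have h4 : binIdx b x ≤ n2 := (binIdx_le_iff hb).2 (hjlt x hx)
      have h5 : binIdx b x ≤ binIdx b (n1 * b + r + 1) := by omega
      rw [max_eq_left h5, min_eq_right h5]
      omega
    have hins := hk (C1 + r * d + m') (insert (n1 * b + r + 1) L')
      (by
        intro x hx
        rcases Finset.mem_insert.1 hx with rfl | hx'
        · omega
        · exact h1 x hx')
      (by
        intro i hi j hj hij
        rcases Finset.mem_insert.1 hi with hi' | hi'
        · rcases Finset.mem_insert.1 hj with hj' | hj'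
          · exact absurd (hi'.trans hj'.symm) hij
          · rw [hi']; exact hkey j hj'
        · rcases Finset.mem_insert.1 hj with hj' | hj'
          · rw [hj', max_comm, min_comm]; exact hkey i hi'
          · exact h2 i hi' j hj' hij)
      (by rw [Finset.sum_insert hpL, h3, hap])
    rw [Finset.card_insert_of_notMem hpL] at hins
    omega
  -- bijection
  have hbij : ((Finset.Ico C1 (C1 + b * d)).filter (fun m => k m = kk)).card
      = (Finset.range b ×ˢ (Finset.range d).filter (fun x => k x = kk - 1)).card := by
    apply Finset.card_bij' (i := fun m _ => ((m - C1) / d, (m - C1) % d))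
      (j := fun p _ => C1 + p.1 * d + p.2)
    · intro m hm
      simp only [Finset.mem_filter, Finset.mem_Ico] at hm
      obtain ⟨⟨hm1, hm2⟩, hm3⟩ := hm
      have hx := Nat.div_add_mod (m - C1) d
      have hrb : (m - C1) / d < b := (Nat.div_lt_iff_lt_mul hd1).2 (by omega)
      have hmod : (m - C1) % d < d := Nat.mod_lt _ hd1
      have hkm := kstep _ hrb _ hmod
      have hmeq : C1 + (m - C1) / d * d + (m - C1) % d = m := by
        have := Nat.mul_comm d ((m - C1) / d)
        omega
      rw [hmeq] at hkm
      simp only [Finset.mem_product, Finset.mem_range, Finset.mem_filter]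
      refine ⟨hrb, hmod, ?_⟩
      show k ((m - C1) % d) = kk - 1
      omega
    · intro p hp
      simp only [Finset.mem_product, Finset.mem_range, Finset.mem_filter] at hp
      obtain ⟨hp1, hp2, hp3⟩ := hp
      have hkm := kstep p.1 hp1 p.2 hp2
      simp only [Finset.mem_filter, Finset.mem_Ico]
      have hlt : p.1 * d + d ≤ b * d := by
        have h5 : (p.1 + 1) * d ≤ b * d := Nat.mul_le_mul_right d (by omega)
        have h6 : (p.1 + 1) * d = p.1 * d + d := by ring
        omega
      exact ⟨⟨by omega, by omega⟩, by omega⟩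
    · intro m hm
      simp only [Finset.mem_filter, Finset.mem_Ico] at hm
      have hx := Nat.div_add_mod (m - C1) d
      have := Nat.mul_comm d ((m - C1) / d)
      show C1 + (m - C1) / d * d + (m - C1) % d = m
      omega
    · intro p hp
      simp only [Finset.mem_product, Finset.mem_range, Finset.mem_filter] at hp
      have h1 : C1 + p.1 * d + p.2 - C1 = d * p.1 + p.2 := by
        have := Nat.mul_comm d p.1
        omega
      have h2 : (d * p.1 + p.2) / d = p.1 := by
        rw [Nat.mul_add_div hd1, Nat.div_eq_of_lt hp.2.1]
        omega
      have h3 : (d * p.1 + p.2) % d = p.2 := by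
        rw [Nat.mul_add_mod]; exact Nat.mod_eq_of_lt hp.2.1
      show (_, _) = p
      rw [h1, h2, h3]
  -- assemble
  rw [hrec, Finset.range_eq_Ico,
    ← Finset.Ico_union_Ico_eq_Ico (Nat.zero_le C1) (Nat.le_add_right C1 (b * d)),
    Finset.filter_union,
    Finset.card_union_of_disjoint (by
      rw [Finset.disjoint_left]
      intro m hm1 hm2
      simp only [Finset.mem_filter, Finset.mem_Ico] at hm1 hm2
      omega),
    ← Finset.range_eq_Ico, hbij, Finset.card_product, Finset.card_range]
  omega
end

section
/- Let s, b ≥ 1 be integers and y > 0 a real number, and consider the complex polynomial f(x) = 1 − x − b·y·x^{s+1}. Then (1) f has no repeated roots, and (2) f has a positive real root λ₁(y) satisfying 0 < λ₁(y) < 1 whose modulus is strictly smaller than the modulus of every other root of f. -/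
open Polynomial

/-- The polynomial `f(x) = 1 - x - b y x^{s+1}` over `ℂ`. -/
noncomputable def genPoly (s b : ℕ) (y : ℝ) : Polynomial ℂ :=
  C 1 - X - C ((b : ℂ) * (y : ℂ)) * X ^ (s + 1)

theorem stmt_19 (s b : ℕ) (hs : 1 ≤ s) (hb : 1 ≤ b) (y : ℝ) (hy : 0 < y) :
    (genPoly s b y).roots.Nodup ∧
    ∃ lam1 : ℝ, 0 < lam1 ∧ lam1 < 1 ∧
      (genPoly s b y).IsRoot (lam1 : ℂ) ∧
      ∀ z : ℂ, (genPoly s b y).IsRoot z → z ≠ (lam1 : ℂ) →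
        lam1 < ‖z‖ := by
  set c : ℝ := (b : ℝ) * y with hcdef
  have hc0 : 0 < c := mul_pos (by exact_mod_cast hb) hy
  have heval : ∀ z : ℂ, (genPoly s b y).eval z = 1 - z - (c : ℂ) * z ^ (s + 1) := by
    intro z
    simp only [genPoly, eval_sub, eval_mul, eval_pow, eval_C, eval_X, hcdef,
      Complex.ofReal_mul, Complex.ofReal_natCast]
  have hder : ∀ z : ℂ, (genPoly s b y).derivative.eval z
      = -1 - (c : ℂ) * (s + 1) * z ^ s := by
    intro z
    simp only [genPoly, derivative_sub, derivative_C, derivative_X, derivative_C_mul,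
      derivative_X_pow, eval_sub, eval_mul, eval_pow, eval_C, eval_X, eval_natCast,
      eval_zero, eval_one, hcdef, Complex.ofReal_mul, Complex.ofReal_natCast]
    push_cast
    ring
  have hkey : ∀ t : ℝ, (genPoly s b y).IsRoot (t : ℂ) ↔ 1 - t - c * t ^ (s + 1) = 0 := by
    intro t
    rw [IsRoot, heval]
    constructor
    · intro h
      have h2 : ((1 - t - c * t ^ (s + 1) : ℝ) : ℂ) = 0 := by push_cast; linear_combination h
      exact_mod_cast h2
    · intro h
      have h2 : ((1 - t - c * t ^ (s + 1) : ℝ) : ℂ) = 0 := by exact_mod_cast h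
      push_cast at h2; linear_combination h2
  -- strict monotonicity of t ↦ t + c t^(s+1) on [0,∞)
  have hmono : StrictMonoOn (fun t : ℝ => t + c * t ^ (s + 1)) (Set.Ici 0) := by
    intro x hx y' hy' hxy
    have h1 : x ^ (s + 1) ≤ y' ^ (s + 1) := pow_le_pow_left₀ hx hxy.le _
    simp only
    nlinarith
  -- existence of lam
  have hcont : ContinuousOn (fun t : ℝ => 1 - t - c * t ^ (s + 1)) (Set.Icc 0 1) := by
    fun_prop
  have hiv := intermediate_value_Ioo' (by norm_num : (0:ℝ) ≤ 1) hcont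
  have h0mem : (0:ℝ) ∈ Set.Ioo (1 - 1 - c * 1 ^ (s + 1)) (1 - 0 - c * 0 ^ (s + 1)) := by
    constructor <;> simp <;> positivity
  obtain ⟨lam, hlam_mem, hglam⟩ := hiv h0mem
  obtain ⟨hlam0, hlam1⟩ := hlam_mem
  -- uniqueness of nonneg real root
  have huniq : ∀ t : ℝ, 0 ≤ t → 1 - t - c * t ^ (s + 1) = 0 → t = lam := by
    intro t ht hgt
    refine hmono.injOn ht hlam0.le ?_
    have hglam' : 1 - lam - c * lam ^ (s + 1) = 0 := hglam
    show t + c * t ^ (s + 1) = lam + c * lam ^ (s + 1)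
    linarith
  constructor
  · -- Nodup via separability
    apply Polynomial.nodup_roots
    rw [Polynomial.separable_def]
    rw [Polynomial.isCoprime_iff_aeval_ne_zero_of_isAlgClosed (k := ℂ) ℂ]
    intro z
    by_contra hcon
    push_neg at hcon
    obtain ⟨h1, h2⟩ := hcon
    rw [Polynomial.aeval_def] at h1 h2
    have h1' : (genPoly s b y).eval z = 0 := by
      rw [← h1]; simp [eval₂_eq_eval_map, Polynomial.map_id]
    have h2' : (genPoly s b y).derivative.eval z = 0 := by
      rw [← h2]; simp [eval₂_eq_eval_map, Polynomial.map_id]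
    rw [heval] at h1'
    rw [hder] at h2'
    have hs0 : (s : ℂ) ≠ 0 := Nat.cast_ne_zero.mpr (by omega)
    -- z = (s+1)/s
    have hz : (s : ℂ) * z = (s : ℂ) + 1 := by
      have hp : z ^ (s + 1) = z ^ s * z := pow_succ z s
      rw [hp] at h1'
      linear_combination (-((s:ℂ) + 1)) * h1' + z * h2'
    have hzval : z = (((s : ℝ) + 1) / s : ℝ) := by
      push_cast
      field_simp
      linear_combination hz
    set t : ℝ := ((s : ℝ) + 1) / s with htdef
    have hsR : (1:ℝ) ≤ (s:ℝ) := by exact_mod_cast hs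
    have ht0 : 0 < t := div_pos (by linarith) (by linarith)
    rw [hzval] at h2'
    have h2c : ((c * (s + 1) * t ^ s : ℝ) : ℂ) = ((-1 : ℝ) : ℂ) := by
      push_cast
      linear_combination -h2'
    have h2r : c * (s + 1) * t ^ s = -1 := by exact_mod_cast h2c
    have hpos := mul_pos (mul_pos hc0 (by linarith : (0:ℝ) < (s:ℝ) + 1)) (pow_pos ht0 s)
    linarith
  · refine ⟨lam, hlam0, hlam1, (hkey lam).mpr hglam, ?_⟩
    intro z hz hne
    by_contra hlt
    push_neg at hlt
    have hz0 : z ≠ 0 := by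
      intro h0
      rw [h0, IsRoot, heval] at hz
      simp at hz
    have hzabs0 : 0 ≤ ‖z‖ := norm_nonneg z
    rw [IsRoot, heval] at hz
    have hroot : z + (c : ℂ) * z ^ (s + 1) = 1 := by linear_combination -hz
    have habs_pow : ‖(c : ℂ) * z ^ (s + 1)‖ = c * ‖z‖ ^ (s + 1) := by
      rw [norm_mul, norm_pow, Complex.norm_real, Real.norm_of_nonneg hc0.le]
    have htri : (1 : ℝ) ≤ ‖z‖ + c * ‖z‖ ^ (s + 1) := by
      calc (1 : ℝ) = ‖z + (c : ℂ) * z ^ (s + 1)‖ := by rw [hroot]; simp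
        _ ≤ ‖z‖ + ‖(c : ℂ) * z ^ (s + 1)‖ := norm_add_le _ _
        _ = _ := by rw [habs_pow]
    have hglam' : lam + c * lam ^ (s + 1) = 1 := by
      have h := hglam; simp only at h; linarith
    have hmle : ‖z‖ + c * ‖z‖ ^ (s + 1) ≤ lam + c * lam ^ (s + 1) := by
      rcases eq_or_lt_of_le hlt with h | h
      · rw [h]
      · exact (hmono (Set.mem_Ici.mpr hzabs0) (Set.mem_Ici.mpr hlam0.le) h).le
    have heqA : ‖z‖ + c * ‖z‖ ^ (s + 1) = 1 :=
      le_antisymm (by linarith) htri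
    have hzlam : ‖z‖ = lam := by
      refine hmono.injOn (Set.mem_Ici.mpr hzabs0) (Set.mem_Ici.mpr hlam0.le) ?_
      show ‖z‖ + c * ‖z‖ ^ (s + 1) = lam + c * lam ^ (s + 1)
      linarith
    have hnorm : ‖z + (c : ℂ) * z ^ (s + 1)‖ = ‖z‖ + ‖(c : ℂ) * z ^ (s + 1)‖ := by
      rw [hroot]
      simp only [habs_pow]
      rw [heqA]
      simp
    obtain ⟨r, hr0, hrz⟩ := (sameRay_iff_norm_add.mpr hnorm).exists_nonneg_left hz0
    have hsm : (r : ℂ) * z = (c : ℂ) * z ^ (s + 1) := by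
      rw [← hrz, Complex.real_smul]
    have hz1 : z * (1 + (r : ℂ)) = 1 := by linear_combination hroot + hsm
    have h1r : (0 : ℝ) < 1 + r := by linarith
    have hzreal : z = (((1 + r)⁻¹ : ℝ) : ℂ) := by
      rw [eq_comm, Complex.ofReal_inv]
      push_cast
      rw [inv_eq_iff_eq_inv, eq_comm, inv_eq_of_mul_eq_one_left]
      linear_combination hz1
    have hteq : (1 + r)⁻¹ = lam := by
      refine huniq _ (by positivity) ?_
      have hz' : 1 - (((1 + r)⁻¹ : ℝ) : ℂ) - (c : ℂ) * (((1 + r)⁻¹ : ℝ) : ℂ) ^ (s + 1) = 0 := by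
        rw [← hzreal]; exact hz
      have hz'' : ((1 - (1 + r)⁻¹ - c * (1 + r)⁻¹ ^ (s + 1) : ℝ) : ℂ) = 0 := by
        push_cast at hz' ⊢
        linear_combination hz'
      exact_mod_cast hz''
    exact hne (by rw [hzreal, hteq])
end
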